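/- Let χ be a non-principal Dirichlet character modulo N with χ(-1) = -1. Then h_N(z; τ, χ) = ∫_ℝ Φ_N(x; χ) e^{πiτx² - 2πzx} dx is an even function of z, i.e., h_N(-z; τ, χ) = h_N(z; τ, χ). -/

import Mathlib

open Finset Complex

noncomputable def PhiChi (N : ℕ) (χ : DirichletCharacter ℂ N) (t : ℂ) : ℂ :=
  (∑ k ∈ Finset.Ico 1 N, χ (k : ZMod N) * Complex.exp (2 * Real.pi * k * t / Real.sqrt N)) /
    (1 - Complex.exp (2 * Real.pi * t * Real.sqrt N))

noncomputable def hN (N : ℕ) (χ : DirichletCharacter ℂ N) (τ z : ℂ) : ℂ :=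
  ∫ x : ℝ, PhiChi N χ x *
    Complex.exp (Real.pi * Complex.I * τ * x ^ 2 - 2 * Real.pi * z * x)

lemma Phi_neg (N : ℕ) (χ : DirichletCharacter ℂ N) (hodd : χ (-1) = -1) (t : ℂ) :
    PhiChi N χ (-t) = PhiChi N χ t := by
  rcases Nat.lt_or_ge N 2 with hN2 | hN2
  · interval_cases N <;> simp [PhiChi]
  have hN0 : 0 < N := by omega
  have hs : (Real.sqrt N : ℂ) ≠ 0 := by
    simp only [ne_eq, Complex.ofReal_eq_zero]
    positivity
  have hsq : (Real.sqrt N : ℂ) * (Real.sqrt N : ℂ) = (N : ℂ) := by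
    rw [← Complex.ofReal_mul, Real.mul_self_sqrt (Nat.cast_nonneg N)]
    push_cast
    ring
  set c : ℂ := Complex.exp (2 * Real.pi * t * Real.sqrt N) with hc_def
  have hc : c ≠ 0 := Complex.exp_ne_zero _
  unfold PhiChi
  have hden : Complex.exp (2 * ↑Real.pi * (-t) * ↑(Real.sqrt N)) = c⁻¹ := by
    rw [show (2 * (Real.pi:ℂ) * (-t) * (Real.sqrt N : ℂ)) =
      -(2 * Real.pi * t * Real.sqrt N) by ring, Complex.exp_neg]
  have hnum : ∑ k ∈ Finset.Ico 1 N, χ (k : ZMod N) *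
      Complex.exp (2 * Real.pi * k * (-t) / Real.sqrt N)
      = ∑ k ∈ Finset.Ico 1 N, (-c⁻¹) * (χ (k : ZMod N) *
        Complex.exp (2 * Real.pi * k * t / Real.sqrt N)) := by
    refine Finset.sum_nbij' (fun k => N - k) (fun k => N - k) ?_ ?_ ?_ ?_ ?_
    · intro a ha
      simp only [Finset.mem_Ico] at ha ⊢
      omega
    · intro a ha
      simp only [Finset.mem_Ico] at ha ⊢
      omega
    · intro a ha
      simp only [Finset.mem_Ico] at ha
      show N - (N - a) = a
      omega
    · intro a ha
      simp only [Finset.mem_Ico] at ha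
      show N - (N - a) = a
      omega
    · intro k hk
      simp only [Finset.mem_Ico] at hk
      have hkN : k ≤ N := by omega
      have hcast : ((N - k : ℕ) : ZMod N) = -(k : ZMod N) := by
        push_cast [hkN]
        simp
      rw [hcast, show (-(k : ZMod N)) = (-1) * (k : ZMod N) by ring, map_mul, hodd]
      have hexp : Complex.exp (2 * Real.pi * k * (-t) / Real.sqrt N)
          = c⁻¹ * Complex.exp (2 * Real.pi * ((N - k : ℕ) : ℂ) * t / Real.sqrt N) := by
        rw [← hden, ← Complex.exp_add]
        congr 1
        have : ((N - k : ℕ) : ℂ) = (N : ℂ) - (k : ℂ) := by push_cast [hkN]; ring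
        rw [this]
        field_simp
        linear_combination t * hsq
      rw [hexp]
      ring
  rw [hnum, hden, ← Finset.mul_sum]
  have h1 : (1 : ℂ) - c⁻¹ = (-c⁻¹) * (1 - c) := by
    field_simp
    ring
  rw [h1, mul_div_mul_left _ _ (by simpa using inv_ne_zero hc : (-c⁻¹) ≠ 0)]

theorem hN_even (N : ℕ) (χ : DirichletCharacter ℂ N) (hχ : χ ≠ 1) (hodd : χ (-1) = -1)
    (τ : ℂ) (hτ : 0 < τ.im) (z : ℂ) :
    hN N χ τ (-z) = hN N χ τ z := by
  unfold hN
  rw [← MeasureTheory.integral_neg_eq_self (fun x : ℝ => PhiChi N χ x *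
    Complex.exp (↑Real.pi * Complex.I * τ * (x : ℂ) ^ 2 - 2 * ↑Real.pi * z * (x : ℂ)))]
  congr 1
  funext x
  push_cast
  rw [Phi_neg N χ hodd]
  congr 1
  ring
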